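/- Let a ≥ e^{(β+1)²} be a positive integer and β > 0. Then there exists a constant c = c(β) such that ∑_{l > a} l^β e^{-(log l)^{3/2}} ≤ c · a^{β+1} e^{-(log a)^{3/2}}. -/

import Mathlib

open Real Finset

private lemma rpow_three_halves {t : ℝ} (ht : 0 < t) :
    t ^ ((3:ℝ)/2) = t * Real.sqrt t := by
  rw [show (3:ℝ)/2 = 1 + 1/2 by norm_num, Real.rpow_add ht, Real.rpow_one,
    Real.sqrt_eq_rpow]

private lemma convA {t0 t : ℝ} (h0 : 0 < t0) (h : t0 ≤ t) :
    t0 ^ ((3:ℝ)/2) + 3/2 * Real.sqrt t0 * (t - t0) ≤ t ^ ((3:ℝ)/2) := by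
  have ht : 0 < t := lt_of_lt_of_le h0 h
  rw [rpow_three_halves h0, rpow_three_halves ht]
  set u0 := Real.sqrt t0
  set u := Real.sqrt t
  have hu0 : u0 ^ 2 = t0 := Real.sq_sqrt h0.le
  have hu : u ^ 2 = t := Real.sq_sqrt ht.le
  have h0' : 0 ≤ u0 := Real.sqrt_nonneg _
  have hle : u0 ≤ u := Real.sqrt_le_sqrt h
  have key : 0 ≤ (u - u0)^2 * (u + u0/2) := by positivity
  nlinarith [key, hu, hu0]

private lemma lemB {r x : ℝ} (hr : 1/2 ≤ r) (hx : 2 ≤ x) :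
    x ^ (-(r+1)) ≤ 2 * ((x-1) ^ (-r) - x ^ (-r)) := by
  have hx0 : 0 < x := by linarith
  have hx1 : 0 < x - 1 := by linarith
  have hr0 : 0 < r := by linarith
  have hlog : Real.log (x-1) ≤ Real.log x - 1/x := by
    have h1 : Real.log ((x-1)/x) ≤ (x-1)/x - 1 := Real.log_le_sub_one_of_pos (by positivity)
    rw [Real.log_div (ne_of_gt hx1) (ne_of_gt hx0)] at h1
    have h2 : (x-1)/x - 1 = -(1/x) := by field_simp; ring
    rw [h2] at h1
    linarith
  have key : x ^ (-r) * (1 + r/x) ≤ (x-1) ^ (-r) := by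
    rw [Real.rpow_def_of_pos hx1, Real.rpow_def_of_pos hx0]
    calc Real.exp (Real.log x * (-r)) * (1 + r/x)
        ≤ Real.exp (Real.log x * (-r)) * Real.exp (r/x) := by
          apply mul_le_mul_of_nonneg_left _ (Real.exp_pos _).le
          linarith [Real.add_one_le_exp (r/x)]
      _ ≤ Real.exp (Real.log (x-1) * (-r)) := by
          rw [← Real.exp_add]
          apply Real.exp_le_exp.2
          have h3 : 1/x * r ≤ (Real.log x - Real.log (x-1)) * r := by
            apply mul_le_mul_of_nonneg_right _ hr0.le
            linarith
          have h4 : r / x = 1/x * r := by ring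
          nlinarith [h3]
  have e3 : x ^ (-(r+1)) = x ^ (-r) * x⁻¹ := by
    rw [show -(r+1) = -r + (-1) by ring, Real.rpow_add hx0, Real.rpow_neg_one]
  have hxp : 0 < x ^ (-r) := Real.rpow_pos_of_pos hx0 _
  have hinv : 0 < x⁻¹ := by positivity
  have hxx : x * x⁻¹ = 1 := mul_inv_cancel₀ (ne_of_gt hx0)
  rw [e3]
  have hdiv : r / x = r * x⁻¹ := by ring
  rw [hdiv] at key
  nlinarith [key, mul_nonneg (mul_nonneg hxp.le hinv.le) (by linarith : (0:ℝ) ≤ 2*r - 1)]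

private lemma tel0 (a : ℕ) (g : ℕ → ℝ) :
    ∀ N, a ≤ N → ∑ n ∈ Finset.Icc (a+1) N, (g (n-1) - g n) = g a - g N := by
  intro N hN
  induction N, hN using Nat.le_induction with
  | base =>
      rw [Finset.Icc_eq_empty (by omega)]
      simp
  | succ N hN ih =>
      rw [Finset.sum_Icc_succ_top (by omega), ih]
      have : N + 1 - 1 = N := by omega
      rw [this]
      ring

private lemma tel {a : ℕ} (g : ℕ → ℝ) (hg0 : ∀ n, 0 ≤ g n)
    (hmono : ∀ n, a ≤ n → g (n+1) ≤ g n)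
    (S : Finset {l : ℕ // a < l}) : ∑ x ∈ S, (g (x.1 - 1) - g x.1) ≤ g a := by
  classical
  have hsum : ∑ x ∈ S, (g (x.1 - 1) - g x.1)
      = ∑ n ∈ S.image Subtype.val, (g (n-1) - g n) := by
    rw [Finset.sum_image (fun x _ y _ h => Subtype.ext h)]
  rw [hsum]
  set T := S.image Subtype.val with hT
  set N := max (T.sup id) a with hN
  have hsub : T ⊆ Finset.Icc (a+1) N := by
    intro n hn
    have h1 : a < n := by
      rcases Finset.mem_image.1 hn with ⟨x, _, rfl⟩
      exact x.2
    have h2 : n ≤ T.sup id := Finset.le_sup (f := id) hn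
    exact Finset.mem_Icc.2 ⟨h1, le_trans h2 (le_max_left _ _)⟩
  have hnn : ∀ n ∈ Finset.Icc (a+1) N, n ∉ T → 0 ≤ g (n-1) - g n := by
    intro n hn _
    have h1 : a + 1 ≤ n := (Finset.mem_Icc.1 hn).1
    have h2 : g ((n-1)+1) ≤ g (n-1) := hmono (n-1) (by omega)
    have h3 : n - 1 + 1 = n := by omega
    rw [h3] at h2
    linarith
  calc ∑ n ∈ T, (g (n-1) - g n)
      ≤ ∑ n ∈ Finset.Icc (a+1) N, (g (n-1) - g n) :=
        Finset.sum_le_sum_of_subset_of_nonneg hsub hnn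
    _ = g a - g N := tel0 a g N (le_max_right _ _)
    _ ≤ g a := by linarith [hg0 N]

theorem stmt0 (β : ℝ) (hβ : 0 < β) :
    ∃ c : ℝ, 0 < c ∧ ∀ a : ℕ, 0 < a → Real.exp ((β + 1) ^ 2) ≤ (a : ℝ) →
      (∑' l : {l : ℕ // a < l},
          ((l : ℕ) : ℝ) ^ β * Real.exp (-(Real.log ((l : ℕ) : ℝ)) ^ ((3 : ℝ) / 2)))
        ≤ c * (a : ℝ) ^ (β + 1) * Real.exp (-(Real.log (a : ℝ)) ^ ((3 : ℝ) / 2)) := by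
  refine ⟨2, two_pos, ?_⟩
  intro a ha hae
  have ha0 : (0:ℝ) < a := by exact_mod_cast ha
  set L := Real.log a with hLdef
  have hLb : (β+1)^2 ≤ L := (Real.le_log_iff_exp_le ha0).2 hae
  have hL1 : 1 < L := by nlinarith
  have hL0 : 0 < L := by linarith
  have hsqrt : β + 1 ≤ Real.sqrt L := by
    have h1 : Real.sqrt ((β+1)^2) ≤ Real.sqrt L := Real.sqrt_le_sqrt hLb
    rwa [Real.sqrt_sq (by linarith)] at h1
  set s : ℝ := 3/2 * Real.sqrt L - β with hsdef
  set r : ℝ := s - 1 with hrdef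
  have hr : 1/2 ≤ r := by
    rw [hrdef, hsdef]; nlinarith
  set C : ℝ := Real.exp (L ^ ((3:ℝ)/2) / 2) with hCdef
  have hC0 : 0 < C := Real.exp_pos _
  -- the comparison function
  set g : ℕ → ℝ := fun n => (n:ℝ) ^ (-r) with hgdef
  have hg0 : ∀ n, 0 ≤ g n := fun n => Real.rpow_nonneg (Nat.cast_nonneg n) _
  have hgmono : ∀ n, a ≤ n → g (n+1) ≤ g n := by
    intro n hn
    have hn0 : (0:ℝ) < n := by
      have : 1 ≤ n := le_trans ha hn
      exact_mod_cast this
    apply Real.rpow_le_rpow_of_nonpos hn0 (by push_cast; linarith) (by linarith)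
  -- eliminate the tsum
  apply tsum_le_of_sum_le' (by positivity)
  intro S
  -- per-term bound
  have hterm : ∀ x : {l : ℕ // a < l}, x ∈ S →
      ((x:ℕ):ℝ) ^ β * Real.exp (-(Real.log ((x:ℕ):ℝ)) ^ ((3:ℝ)/2))
        ≤ 2 * C * (g ((x:ℕ) - 1) - g (x:ℕ)) := by
    rintro ⟨x, hx⟩ _
    simp only
    have hx1 : 1 ≤ x := le_trans ha (le_of_lt hx)
    have hx2 : (2:ℝ) ≤ (x:ℝ) := by
      have : a + 1 ≤ x := hx
      have : 2 ≤ x := by omega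
      exact_mod_cast this
    have hx0 : (0:ℝ) < (x:ℝ) := by linarith
    have hxa : (a:ℝ) ≤ (x:ℝ) := by exact_mod_cast le_of_lt hx
    set t := Real.log (x:ℝ) with htdef
    have htL : L ≤ t := Real.log_le_log ha0 hxa
    have ht0 : 0 < t := lt_of_lt_of_le hL0 htL
    -- first bound: f x ≤ C * x^(-s)
    have hstep1 : ((x:ℕ):ℝ) ^ β * Real.exp (-(Real.log ((x:ℕ):ℝ)) ^ ((3:ℝ)/2))
        ≤ C * (x:ℝ) ^ (-s) := by
      rw [Real.rpow_def_of_pos hx0 β, ← Real.exp_add, hCdef,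
        Real.rpow_def_of_pos hx0 (-s), ← Real.exp_add]
      apply Real.exp_le_exp.2
      have hA := convA hL0 htL
      have eLL : L ^ ((3:ℝ)/2) = L * Real.sqrt L := rpow_three_halves hL0
      rw [hsdef]
      rw [← htdef]
      nlinarith [hA, eLL]
    -- second bound: x^(-s) ≤ 2 * (g (x-1) - g x)
    have hstep2 : (x:ℝ) ^ (-s) ≤ 2 * (g (x - 1) - g x) := by
      have hB := lemB hr hx2
      have hs : -s = -(r+1) := by rw [hrdef]; ring
      rw [hs]
      have hcast : ((x - 1 : ℕ):ℝ) = (x:ℝ) - 1 := by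
        push_cast [hx1]; ring
      rw [hgdef]
      simp only [hcast]
      exact hB
    calc ((x:ℕ):ℝ) ^ β * Real.exp (-(Real.log ((x:ℕ):ℝ)) ^ ((3:ℝ)/2))
        ≤ C * (x:ℝ) ^ (-s) := hstep1
      _ ≤ C * (2 * (g (x - 1) - g x)) := by
          apply mul_le_mul_of_nonneg_left hstep2 hC0.le
      _ = 2 * C * (g (x - 1) - g x) := by ring
  -- sum up
  have hsum := Finset.sum_le_sum hterm
  have htel := tel g hg0 hgmono S
  have hfinal : 2 * C * g a = 2 * (a:ℝ) ^ (β+1) * Real.exp (-L ^ ((3:ℝ)/2)) := by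
    rw [hgdef]
    simp only
    rw [Real.rpow_def_of_pos ha0 (-r), Real.rpow_def_of_pos ha0 (β+1), hCdef,
      ← hLdef]
    rw [mul_assoc, ← Real.exp_add, mul_assoc, ← Real.exp_add]
    congr 2
    have eLL : L ^ ((3:ℝ)/2) = L * Real.sqrt L := rpow_three_halves hL0
    rw [hrdef, hsdef]
    nlinarith [eLL]
  calc ∑ x ∈ S, ((x:ℕ):ℝ) ^ β * Real.exp (-(Real.log ((x:ℕ):ℝ)) ^ ((3:ℝ)/2))
      ≤ ∑ x ∈ S, 2 * C * (g ((x:ℕ) - 1) - g (x:ℕ)) := hsum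
    _ = 2 * C * ∑ x ∈ S, (g ((x:ℕ) - 1) - g (x:ℕ)) := by rw [Finset.mul_sum]
    _ ≤ 2 * C * g a := by
        apply mul_le_mul_of_nonneg_left htel (by positivity)
    _ = 2 * (a:ℝ) ^ (β+1) * Real.exp (-L ^ ((3:ℝ)/2)) := hfinal
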